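/- Let A : [−h, ∞) → ℝ be continuous, differentiable on (0, ∞), satisfying A'(t) = q(A(t−h) − A(t)) for t ≥ 0, with q, h > 0. If A converges to a limit A_∞ at +∞ and A' is integrable on [0,∞), then A_∞(1 + qh) = A(0) + q∫_{−h}^{0} A(s) ds. -/

import Mathlib

theorem delay_eq_limit_identity (q h : ℝ) (hq : 0 < q) (hh : 0 < h)
    (A : ℝ → ℝ) (Ainf : ℝ)
    (hcont : ContinuousOn A (Set.Ici (-h)))
    (hode : ∀ t ≥ (0 : ℝ), HasDerivAt A (q * (A (t - h) - A t)) t)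
    (hlim : Filter.Tendsto A Filter.atTop (nhds Ainf))
    (hint : MeasureTheory.IntegrableOn (deriv A) (Set.Ici 0)) :
    Ainf * (1 + q * h) = A 0 + q * ∫ s in (-h)..0, A s := by
  have hIntA : ∀ a b : ℝ, -h ≤ a → -h ≤ b →
      IntervalIntegrable A MeasureTheory.volume a b := by
    intro a b ha hb
    refine (hcont.mono ?_).intervalIntegrable
    intro x hx
    exact le_trans (le_min ha hb) hx.1
  have key : ∀ T : ℝ, 0 ≤ T →
      A T - A 0 = q * ((∫ s in (-h)..0, A s) - ∫ s in (T - h)..T, A s) := by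
    intro T hT
    have hsub : Set.uIcc 0 T ⊆ Set.Ici (0:ℝ) := by
      rw [Set.uIcc_of_le hT]; exact fun x hx => hx.1
    have hca : ContinuousOn A (Set.uIcc 0 T) :=
      hcont.mono (fun x hx => le_trans (by linarith : -h ≤ (0:ℝ)) (hsub hx))
    have hcs : ContinuousOn (fun t => A (t - h)) (Set.uIcc 0 T) := by
      apply hcont.comp (continuousOn_id.sub continuousOn_const)
      intro x hx
      have h0 : (0:ℝ) ≤ x := hsub hx
      simp only [Set.mem_Ici, Pi.sub_apply, id_eq]
      linarith
    have hftc := intervalIntegral.integral_eq_sub_of_hasDerivAt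
      (f := A) (f' := fun t => q * (A (t - h) - A t))
      (fun t ht => hode t (hsub ht))
      ((continuousOn_const.mul (hcs.sub hca)).intervalIntegrable)
    have i1 : IntervalIntegrable (fun t => A (t - h)) MeasureTheory.volume 0 T :=
      hcs.intervalIntegrable
    have i2 : IntervalIntegrable A MeasureTheory.volume 0 T :=
      hca.intervalIntegrable
    rw [intervalIntegral.integral_const_mul, intervalIntegral.integral_sub i1 i2] at hftc
    rw [intervalIntegral.integral_comp_sub_right (fun t => A t) h] at hftc
    have s1 : (∫ s in (0 - h)..(T - h), A s)
        = (∫ s in (0 - h)..0, A s) + ∫ s in (0:ℝ)..(T - h), A s :=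
      (intervalIntegral.integral_add_adjacent_intervals
        (hIntA _ _ (by linarith) (by linarith))
        (hIntA _ _ (by linarith) (by linarith))).symm
    have s2 : (∫ s in (0:ℝ)..T, A s)
        = (∫ s in (0:ℝ)..(T - h), A s) + ∫ s in (T - h)..T, A s :=
      (intervalIntegral.integral_add_adjacent_intervals
        (hIntA _ _ (by linarith) (by linarith))
        (hIntA _ _ (by linarith) (by linarith))).symm
    rw [s1, s2] at hftc
    rw [← hftc, zero_sub]
    ring
  have tend2 : Filter.Tendsto (fun T => ∫ s in (T - h)..T, A s)
      Filter.atTop (nhds (h * Ainf)) := by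
    rw [Metric.tendsto_atTop] at hlim ⊢
    intro ε hε
    obtain ⟨N, hN⟩ := hlim (ε / (2 * h)) (by positivity)
    refine ⟨max N 0 + h, fun T hT => ?_⟩
    have hmN : N ≤ max N 0 := le_max_left N 0
    have hm0 : (0:ℝ) ≤ max N 0 := le_max_right N 0
    have hTh : N ≤ T - h := by linarith
    have hTh0 : -h ≤ T - h := by linarith
    have hconst : (∫ s in (T - h)..T, (Ainf : ℝ)) = h * Ainf := by
      rw [intervalIntegral.integral_const, smul_eq_mul]
      ring
    have heq : (∫ s in (T - h)..T, A s) - h * Ainf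
        = ∫ s in (T - h)..T, (A s - Ainf) := by
      rw [intervalIntegral.integral_sub (hIntA _ _ hTh0 (by linarith))
        intervalIntegrable_const, hconst]
    have hb : ‖∫ s in (T - h)..T, (A s - Ainf)‖ ≤ (ε / (2 * h)) * |T - (T - h)| := by
      apply intervalIntegral.norm_integral_le_of_norm_le_const
      intro x hx
      rw [Set.uIoc_of_le (by linarith : T - h ≤ T)] at hx
      have hNx : N ≤ x := le_trans hTh (le_of_lt hx.1)
      have := hN x hNx
      rw [Real.dist_eq] at this
      rw [Real.norm_eq_abs]
      exact le_of_lt this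
    have habs : |T - (T - h)| = h := by
      rw [abs_of_nonneg (by linarith)]
      ring
    rw [habs] at hb
    rw [Real.dist_eq]
    calc |(∫ s in (T - h)..T, A s) - h * Ainf| ≤ ε / (2 * h) * h := by
          rw [heq]; exact hb
      _ < ε := by
          have h2 : ε / (2 * h) * h = ε / 2 := by
            field_simp
          rw [h2]; linarith
  have t1 : Filter.Tendsto (fun T => A T - A 0) Filter.atTop (nhds (Ainf - A 0)) :=
    hlim.sub_const _
  have t2 : Filter.Tendsto
      (fun T => q * ((∫ s in (-h)..0, A s) - ∫ s in (T - h)..T, A s))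
      Filter.atTop (nhds (q * ((∫ s in (-h)..0, A s) - h * Ainf))) :=
    (Filter.Tendsto.sub tendsto_const_nhds tend2).const_mul q
  have t3 : Filter.Tendsto (fun T => A T - A 0) Filter.atTop
      (nhds (q * ((∫ s in (-h)..0, A s) - h * Ainf))) := by
    refine t2.congr' ?_
    filter_upwards [Filter.eventually_ge_atTop (0:ℝ)] with T hT
    exact (key T hT).symm
  have hfin := tendsto_nhds_unique t3 t1
  nlinarith [hfin]
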